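/- arXiv:2011.05472 — 2 statements merged into one kernel-verified Lean document; each statement's English description precedes it below -/
import Mathlib

section
/- Let t and t' be finite directed trees, each with at least two vertices, with designated roots ρ and ρ' of degree one, and in which no vertex has indegree and outdegree both equal to one. Let T be the multidigraph obtained by identifying ρ with ρ', and let π be a solid partition of the vertex set of T such that the quotient T^π is an oriented cactus, with induced bijection f_π from the vertices of t to the vertices of t' (sending ρ to ρ'). Then f_π reverses adjacency: for vertices v, w of t, there is an edge directed from v to w in t if and only if there is an edge directed from f_π(w) to f_π(v) in t'. In particular, f_π is an anti-isomorphism of rooted directed trees. -/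
set_option autoImplicit false

/-! ## Multigraphs -/

/-- A multigraph: a vertex type `V`, an edge type `E`, and an assignment to each edge of
its unordered pair of endpoints.  Loops and parallel edges are allowed. -/
structure Multigraph (V E : Type) where
  ends : E → Sym2 V

namespace Multigraph

variable {V E : Type}

/-- `G.ReachAvoid F u v` : `v` can be reached from `u` by a walk using no edge of `F`. -/
inductive ReachAvoid (G : Multigraph V E) (F : Set E) : V → V → Prop
  | refl (v : V) : ReachAvoid G F v v
  | tail {u v w : V} (e : E) (he : e ∉ F) (hvw : G.ends e = s(v, w))
      (h : ReachAvoid G F u v) : ReachAvoid G F u w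

/-- A multigraph is connected if any two vertices are joined by a walk. -/
def Connected (G : Multigraph V E) : Prop := ∀ u v : V, G.ReachAvoid ∅ u v

/-- `F` is a set of edges whose deletion disconnects `v` from `w`. -/
def IsEdgeCut (G : Multigraph V E) (v w : V) (F : Set E) : Prop := ¬ G.ReachAvoid F v w

/-- Edge connectivity `λ(v, w)`: the minimum number of edges whose deletion
disconnects `v` from `w`. -/
noncomputable def edgeConn (G : Multigraph V E) (v w : V) : ℕ :=
  sInf {k : ℕ | ∃ F : Finset E, F.card = k ∧ G.IsEdgeCut v w ↑F}

/-- Walks in a multigraph, recorded together with the edges they traverse. -/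
inductive Walk (G : Multigraph V E) : V → V → Type
  | nil (v : V) : Walk G v v
  | cons {u v w : V} (e : E) (huv : G.ends e = s(u, v)) (p : Walk G v w) : Walk G u w

namespace Walk

variable {G : Multigraph V E}

/-- The list of edges traversed by a walk. -/
def edges : ∀ {u v : V}, G.Walk u v → List E
  | _, _, .nil _ => []
  | _, _, .cons e _ p => e :: edges p

/-- The list of vertices visited by a walk (including both endpoints). -/
def verts : ∀ {u v : V}, G.Walk u v → List V
  | _, v, .nil _ => [v]
  | u, _, .cons _ _ p => u :: verts p

/-- A walk is a path if it visits no vertex twice. -/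
def IsPath {u v : V} (p : G.Walk u v) : Prop := p.verts.Nodup

end Walk

/-- `S` is the edge set of a simple cycle of `G`: a nonempty closed walk with no repeated
edges and no repeated vertices (other than the final return to the starting point).
A loop is a simple cycle of length one. -/
def IsSimpleCycleOn [DecidableEq E] (G : Multigraph V E) (S : Finset E) : Prop :=
  ∃ (v : V) (p : G.Walk v v),
    p.edges ≠ [] ∧ p.edges.Nodup ∧ p.verts.dropLast.Nodup ∧ p.edges.toFinset = S

/-- A cactus: a connected multigraph in which every edge lies on exactly one simple cycle
(simple cycles being identified with their edge sets). -/
def IsCactus [DecidableEq E] (G : Multigraph V E) : Prop :=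
  G.Connected ∧ ∀ e : E, ∃! S : Finset E, G.IsSimpleCycleOn S ∧ e ∈ S

/-- Two-edge-connected: connected, and still connected after deleting any single edge. -/
def TwoEdgeConnected (G : Multigraph V E) : Prop :=
  G.Connected ∧ ∀ (e : E) (u v : V), G.ReachAvoid {e} u v

/-- The quotient multigraph by a partition (setoid) of the vertices: the vertices are the
blocks, and each edge joins the blocks of its original endpoints. -/
def quot (G : Multigraph V E) (σ : Setoid V) : Multigraph (Quotient σ) E :=
  ⟨fun e => (G.ends e).map (Quotient.mk σ)⟩

/-- Degree of a vertex: the number of edge-incidences at it (loops count twice). -/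
def degree [DecidableEq V] [Fintype E] (G : Multigraph V E) (v : V) : ℕ :=
  ∑ e : E,
    Sym2.lift
      ⟨fun a b => (if a = v then 1 else 0) + (if b = v then 1 else 0),
        fun _ _ => add_comm _ _⟩ (G.ends e)

/-- A leaf is a vertex of degree one. -/
def IsLeaf [DecidableEq V] [Fintype E] (G : Multigraph V E) (v : V) : Prop :=
  G.degree v = 1

/-- A tree: a connected multigraph with no simple cycles. -/
def IsTree [DecidableEq E] (G : Multigraph V E) : Prop :=
  G.Connected ∧ ∀ S : Finset E, ¬ G.IsSimpleCycleOn S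

end Multigraph

/-- An embedding of the multigraph `H` into `G`, realizing `H` as a subgraph of `G`. -/
structure Multigraph.Embedding {W F V E : Type} (H : Multigraph W F) (G : Multigraph V E) where
  vmap : W → V
  emap : F → E
  vmap_inj : Function.Injective vmap
  emap_inj : Function.Injective emap
  ends_map : ∀ f : F, G.ends (emap f) = (H.ends f).map vmap

/-! ## Multidigraphs -/

/-- A multidigraph: vertex type `V`, edge type `E`, and source and target maps. -/
structure Multidigraph (V E : Type) where
  src : E → V
  tgt : E → V

namespace Multidigraph

variable {V E : Type}

/-- The underlying multigraph of a multidigraph. -/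
def toMultigraph (D : Multidigraph V E) : Multigraph V E :=
  ⟨fun e => s(D.src e, D.tgt e)⟩

/-- Directed walks in a multidigraph. -/
inductive DiWalk (D : Multidigraph V E) : V → V → Type
  | nil (v : V) : DiWalk D v v
  | cons {u v w : V} (e : E) (hs : D.src e = u) (ht : D.tgt e = v)
      (p : DiWalk D v w) : DiWalk D u w

namespace DiWalk

variable {D : Multidigraph V E}

/-- The list of edges traversed by a directed walk. -/
def edges : ∀ {u v : V}, D.DiWalk u v → List E
  | _, _, .nil _ => []
  | _, _, .cons e _ _ p => e :: edges p

/-- The list of vertices visited by a directed walk. -/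
def verts : ∀ {u v : V}, D.DiWalk u v → List V
  | _, v, .nil _ => [v]
  | u, _, .cons _ _ _ p => u :: verts p

end DiWalk

/-- `S` is the edge set of a simple directed cycle of `D`. -/
def IsDiCycleOn [DecidableEq E] (D : Multidigraph V E) (S : Finset E) : Prop :=
  ∃ (v : V) (p : D.DiWalk v v),
    p.edges ≠ [] ∧ p.edges.Nodup ∧ p.verts.dropLast.Nodup ∧ p.edges.toFinset = S

/-- An oriented cactus: the underlying multigraph is a cactus and each of its simple
cycles (pads) is a directed cycle. -/
def IsOrientedCactus [DecidableEq E] (D : Multidigraph V E) : Prop :=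
  D.toMultigraph.IsCactus ∧
    ∀ S : Finset E, D.toMultigraph.IsSimpleCycleOn S → D.IsDiCycleOn S

/-- The quotient multidigraph by a partition (setoid) of the vertices. -/
def quot (D : Multidigraph V E) (σ : Setoid V) : Multidigraph (Quotient σ) E where
  src := fun e => Quotient.mk σ (D.src e)
  tgt := fun e => Quotient.mk σ (D.tgt e)

/-- Indegree of a vertex: the number of edges with target `v`. -/
def indeg [DecidableEq V] [Fintype E] (D : Multidigraph V E) (v : V) : ℕ :=
  (Finset.univ.filter fun e => D.tgt e = v).card

/-- Outdegree of a vertex: the number of edges with source `v`. -/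
def outdeg [DecidableEq V] [Fintype E] (D : Multidigraph V E) (v : V) : ℕ :=
  (Finset.univ.filter fun e => D.src e = v).card

end Multidigraph

/-- An embedding of the multidigraph `H` into `G`, realizing `H` as a subgraph of `G`. -/
structure Multidigraph.Embedding {W F V E : Type}
    (H : Multidigraph W F) (G : Multidigraph V E) where
  vmap : W → V
  emap : F → E
  vmap_inj : Function.Injective vmap
  emap_inj : Function.Injective emap
  src_map : ∀ f : F, G.src (emap f) = vmap (H.src f)
  tgt_map : ∀ f : F, G.tgt (emap f) = vmap (H.tgt f)

/-! ## Cycle graphs and non-crossing partitions -/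

/-- The cycle graph of length `n`: vertices `Fin n`, edges `Fin n`, edge `i` joining
`v i` and `v (i+1)` (indices mod `n`). -/
def cycleGraph (n : ℕ) [NeZero n] : Multigraph (Fin n) (Fin n) :=
  ⟨fun i => s(i, i + 1)⟩

/-- The cycle graph of length `n` in which each edge carries an orientation:
edge `i` is oriented counterclockwise (from `v i` to `v (i+1)`) if `orient i = true`,
and clockwise otherwise. -/
def cycleDigraph (n : ℕ) [NeZero n] (orient : Fin n → Bool) : Multidigraph (Fin n) (Fin n) where
  src := fun i => if orient i then i else i + 1
  tgt := fun i => if orient i then i + 1 else i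

/-- A relation (e.g. a partition) on `Fin m` is non-crossing if there are no indices
`i₁ < i₂ < i₃ < i₄` with `i₁, i₃` in one block and `i₂, i₄` in a different block. -/
def NonCrossingRel {m : ℕ} (r : Fin m → Fin m → Prop) : Prop :=
  ¬ ∃ i₁ i₂ i₃ i₄ : Fin m, i₁ < i₂ ∧ i₂ < i₃ ∧ i₃ < i₄ ∧ r i₁ i₃ ∧ r i₂ i₄ ∧ ¬ r i₁ i₂

/-- The union of a partition `σ` of the vertices `v₁, …, vₙ` (at the even positions) and
a partition `κ` of the edges `e₁, …, eₙ` (at the odd positions) of a cycle, as a relation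
on the `2n` interlaced points `v₁, e₁, v₂, e₂, …, vₙ, eₙ`. -/
def interRel {n : ℕ} (σ κ : Setoid (Fin n)) (x y : Fin (2 * n)) : Prop :=
  (x.val % 2 = 0 ∧ y.val % 2 = 0 ∧
    σ.r ⟨x.val / 2, by have := x.isLt; omega⟩ ⟨y.val / 2, by have := y.isLt; omega⟩) ∨
  (x.val % 2 = 1 ∧ y.val % 2 = 1 ∧
    κ.r ⟨x.val / 2, by have := x.isLt; omega⟩ ⟨y.val / 2, by have := y.isLt; omega⟩)

/-- `κ` is the Kreweras complement of `σ`: the largest partition of the edges such that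
the union `σ ∪ κ` is non-crossing with respect to the interlaced (cyclic) order. -/
def IsKrewerasComplement {n : ℕ} (σ κ : Setoid (Fin n)) : Prop :=
  NonCrossingRel (interRel σ κ) ∧
    ∀ κ' : Setoid (Fin n), NonCrossingRel (interRel σ κ') → κ' ≤ κ

open Classical in
/-- The block of the partition `κ` containing `i`, as a finite set. -/
noncomputable def setoidClass {n : ℕ} (κ : Setoid (Fin n)) (i : Fin n) : Finset (Fin n) :=
  Finset.univ.filter fun j => κ.r i j

open Fin.NatCast in
/-- `j` is the next element of `B` encountered strictly after `i` in the cyclic order of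
`Fin n` (if `B = {i}` then `j = i` itself, one full turn later). -/
def CyclicNextIn {n : ℕ} [NeZero n] (B : Finset (Fin n)) (i j : Fin n) : Prop :=
  i ∈ B ∧ j ∈ B ∧ ∃ d : ℕ, 0 < d ∧ d ≤ n ∧ j = i + (d : Fin n) ∧
    ∀ d' : ℕ, 0 < d' → d' < d → i + (d' : Fin n) ∉ B

/-! ## Wedges of two (di)graphs at their roots -/

/-- The canonical map from the vertices of `t'` into the wedge vertex type
`V ⊕ {x : V' // x ≠ ρ'}`, sending the root `ρ'` to (the image of) `ρ`. -/
def wedgeJ {V V' : Type} [DecidableEq V'] (ρ : V) (ρ' : V') :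
    V' → V ⊕ {x : V' // x ≠ ρ'} :=
  fun x => if h : x = ρ' then Sum.inl ρ else Sum.inr ⟨x, h⟩

/-- The wedge of two multigraphs `t`, `t'` obtained by identifying `ρ ∈ t` with `ρ' ∈ t'`. -/
def Multigraph.wedge {V E V' E' : Type} [DecidableEq V']
    (t : Multigraph V E) (t' : Multigraph V' E') (ρ : V) (ρ' : V') :
    Multigraph (V ⊕ {x : V' // x ≠ ρ'}) (E ⊕ E') :=
  ⟨fun e =>
    match e with
    | Sum.inl e => (t.ends e).map Sum.inl
    | Sum.inr e => (t'.ends e).map (wedgeJ ρ ρ')⟩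

/-- The wedge of two multidigraphs `t`, `t'` obtained by identifying `ρ ∈ t` with `ρ' ∈ t'`. -/
def Multidigraph.wedge {V E V' E' : Type} [DecidableEq V']
    (t : Multidigraph V E) (t' : Multidigraph V' E') (ρ : V) (ρ' : V') :
    Multidigraph (V ⊕ {x : V' // x ≠ ρ'}) (E ⊕ E') where
  src := fun e =>
    match e with
    | Sum.inl e => Sum.inl (t.src e)
    | Sum.inr e => wedgeJ ρ ρ' (t'.src e)
  tgt := fun e =>
    match e with
    | Sum.inl e => Sum.inl (t.tgt e)
    | Sum.inr e => wedgeJ ρ ρ' (t'.tgt e)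

/-! ## Flowers (a cycle with graphs attached) and stars (trees wedged at a common root) -/

/-- The canonical map from the vertices of the `i`-th attached graph into the flower,
sending the basepoint `b i` to the cycle vertex `i`. -/
def flowerJ {n : ℕ} {W : Fin n → Type} [∀ i, DecidableEq (W i)]
    (b : ∀ i, W i) (i : Fin n) :
    W i → Fin n ⊕ (Σ i, {x : W i // x ≠ b i}) :=
  fun x => if h : x = b i then Sum.inl i else Sum.inr ⟨i, x, h⟩

/-- The flower: a cycle of length `n` with the multigraph `d i` attached at the cycle
vertex `i` via its basepoint `b i`; the attached graphs are disjoint except through the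
cycle, and `d i` meets the cycle exactly in the vertex `i`. -/
def flowerGraph {n : ℕ} [NeZero n] {W F : Fin n → Type} [∀ i, DecidableEq (W i)]
    (d : ∀ i, Multigraph (W i) (F i)) (b : ∀ i, W i) :
    Multigraph (Fin n ⊕ (Σ i, {x : W i // x ≠ b i})) (Fin n ⊕ (Σ i, F i)) :=
  ⟨fun e =>
    match e with
    | Sum.inl k => s(Sum.inl k, Sum.inl (k + 1))
    | Sum.inr ⟨i, f⟩ => ((d i).ends f).map (flowerJ b i)⟩

/-- The canonical map from the vertices of the `i`-th tree into the star, sending the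
root `r i` to the common amalgamated root. -/
def starJ {n : ℕ} {W : Fin n → Type} [∀ i, DecidableEq (W i)]
    (r : ∀ i, W i) (i : Fin n) :
    W i → Unit ⊕ (Σ i, {x : W i // x ≠ r i}) :=
  fun x => if h : x = r i then Sum.inl () else Sum.inr ⟨i, x, h⟩

/-- The star: the disjoint union of the multigraphs `t i` with all the roots `r i`
identified to a single vertex. -/
def starGraph {n : ℕ} {W F : Fin n → Type} [∀ i, DecidableEq (W i)]
    (t : ∀ i, Multigraph (W i) (F i)) (r : ∀ i, W i) :
    Multigraph (Unit ⊕ (Σ i, {x : W i // x ≠ r i})) (Σ i, F i) :=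
  ⟨fun e => ((t e.1).ends e.2).map (starJ r e.1)⟩

/-! ## Graphs of matrices -/

/-- The partition of `V` identifying the input `vin` with the output `vout` (and nothing
else). -/
def rootSetoid {V : Type} (vin vout : V) : Setoid V where
  r a b := a = b ∨ ((a = vin ∨ a = vout) ∧ (b = vin ∨ b = vout))
  iseqv := by
    constructor
    · intro x; exact Or.inl rfl
    · rintro x y (rfl | ⟨hx, hy⟩)
      · exact Or.inl rfl
      · exact Or.inr ⟨hy, hx⟩
    · rintro x y z (rfl | ⟨hx, hy⟩) (rfl | ⟨hy', hz⟩)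
      · exact Or.inl rfl
      · exact Or.inr ⟨hy', hz⟩
      · exact Or.inr ⟨hx, hy⟩
      · exact Or.inr ⟨hx, hz⟩

/-- The graph of matrices `Z_g(A₁, …, A_K)` associated to a bi-rooted multidigraph `g`
with input `vin`, output `vout` and edge ordering `o`. -/
noncomputable def graphOfMatrices {V E : Type} [Fintype V] [Fintype E] [DecidableEq V] {K N : ℕ}
    (g : Multidigraph V E) (vin vout : V) (o : E ≃ Fin K)
    (A : Fin K → Matrix (Fin N) (Fin N) ℂ) : Matrix (Fin N) (Fin N) ℂ :=
  Matrix.of fun i j =>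
    ∑ φ : V → Fin N,
      if φ vout = i ∧ φ vin = j then ∏ e : E, A (o e) (φ (g.tgt e)) (φ (g.src e)) else 0

/-! ## Set partitions as finite set systems -/

/-- `P` is a partition of the (finite) type `V`: its blocks are nonempty and every
element of `V` lies in exactly one block. -/
def IsPartitionOf (V : Type) [DecidableEq V] (P : Finset (Finset V)) : Prop :=
  (∀ B ∈ P, B.Nonempty) ∧ ∀ v : V, ∃! B, B ∈ P ∧ v ∈ B

/-- The block of the partition `P` containing `v`. -/
def blockOf {V : Type} [DecidableEq V] (P : Finset (Finset V)) (hP : IsPartitionOf V P)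
    (v : V) : {B : Finset V // B ∈ P} :=
  ⟨Finset.choose (fun B => v ∈ B) P (hP.2 v),
    Finset.choose_mem (fun B => v ∈ B) P (hP.2 v)⟩

/-! ## Auxiliary machinery for Statement 11 -/

namespace Stmt11

open Multigraph

variable {V E : Type} {G : Multigraph V E}

theorem sym2_exists_eq (z : Sym2 V) : ∃ a b : V, z = s(a, b) :=
  Sym2.ind (fun a b => ⟨a, b, rfl⟩) z

/-! ### Walk lemmas -/

namespace W

open Multigraph.Walk

theorem start_mem_verts : ∀ {u v : V} (p : G.Walk u v), u ∈ p.verts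
  | _, _, .nil v => by simp [Walk.verts]
  | _, _, .cons e h p => by simp [Walk.verts]

theorem eq_of_edges_nil : ∀ {u v : V} (p : G.Walk u v), p.edges = [] → u = v
  | _, _, .nil v, _ => rfl
  | _, _, .cons e h p, hn => by simp [Walk.edges] at hn

/-- Change the endpoints of a walk along equalities. -/
def copy {u v u' v' : V} (p : G.Walk u v) (hu : u = u') (hv : v = v') : G.Walk u' v' :=
  hu ▸ hv ▸ p

@[simp] theorem verts_copy {u v u' v' : V} (p : G.Walk u v) (hu : u = u') (hv : v = v') :
    (copy p hu hv).verts = p.verts := by subst hu; subst hv; rfl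

@[simp] theorem edges_copy {u v u' v' : V} (p : G.Walk u v) (hu : u = u') (hv : v = v') :
    (copy p hu hv).edges = p.edges := by subst hu; subst hv; rfl

/-- Append an edge at the end of a walk. -/
def snoc : ∀ {u v : V}, G.Walk u v → ∀ {w : V} (e : E), G.ends e = s(v, w) → G.Walk u w
  | _, _, .nil v, w, e, h => .cons e h (.nil w)
  | _, _, .cons f hf p, w, e, h => .cons f hf (snoc p e h)

@[simp] theorem edges_snoc : ∀ {u v : V} (p : G.Walk u v) {w : V} (e : E)
    (h : G.ends e = s(v, w)), (snoc p e h).edges = p.edges ++ [e]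
  | _, _, .nil v, w, e, h => rfl
  | _, _, .cons f hf p, w, e, h => by
      simp [snoc, Walk.edges, edges_snoc p e h]

@[simp] theorem verts_snoc : ∀ {u v : V} (p : G.Walk u v) {w : V} (e : E)
    (h : G.ends e = s(v, w)), (snoc p e h).verts = p.verts ++ [w]
  | _, _, .nil v, w, e, h => rfl
  | _, _, .cons f hf p, w, e, h => by
      simp [snoc, Walk.verts, verts_snoc p e h]

/-- Initial segment of a walk up to the first occurrence of `w`. -/
def takeUntil [DecidableEq V] :
    ∀ {u v : V} (p : G.Walk u v) (w : V), w ∈ p.verts → G.Walk u w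
  | _, v, .nil _, w, h =>
      copy (.nil v) rfl (show w = v by simpa [Walk.verts] using h).symm
  | u, v, .cons e he p, w, h =>
      if hw : u = w then copy (.nil u) rfl hw
      else
        .cons e he (takeUntil p w (by
          rcases (by simpa [Walk.verts] using h) with h' | h'
          · exact absurd h'.symm hw
          · exact h'))

theorem verts_takeUntil_sublist [DecidableEq V] :
    ∀ {u v : V} (p : G.Walk u v) (w : V) (h : w ∈ p.verts),
      (takeUntil p w h).verts.Sublist p.verts
  | _, v, .nil _, w, h => by
      simp [takeUntil, Walk.verts]
  | u, v, .cons e he p, w, h => by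
      by_cases hw : u = w
      · simp only [takeUntil, dif_pos hw, verts_copy]
        simpa [Walk.verts] using List.Sublist.cons _ (List.nil_sublist _)
      · simp only [takeUntil, dif_neg hw, Walk.verts]
        exact (verts_takeUntil_sublist p w _).cons₂ u

theorem edges_takeUntil_sublist [DecidableEq V] :
    ∀ {u v : V} (p : G.Walk u v) (w : V) (h : w ∈ p.verts),
      (takeUntil p w h).edges.Sublist p.edges
  | _, v, .nil _, w, h => by simp [takeUntil, Walk.edges]
  | u, v, .cons e he p, w, h => by
      by_cases hw : u = w
      · simp [takeUntil, dif_pos hw, Walk.edges]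
      · simp only [takeUntil, dif_neg hw, Walk.edges]
        exact (edges_takeUntil_sublist p w _).cons₂ e

theorem mem_verts_of_mem_edges :
    ∀ {u v : V} (p : G.Walk u v) {e : E} {a b : V},
      e ∈ p.edges → G.ends e = s(a, b) → a ∈ p.verts ∧ b ∈ p.verts
  | _, _, .nil v, e, a, b, he, hab => by simp [Walk.edges] at he
  | u, _, .cons f hf p, e, a, b, he, hab => by
      simp only [Walk.edges, List.mem_cons] at he
      rcases he with rfl | he
      · rw [hf] at hab
        have hst := start_mem_verts p
        rcases Sym2.eq_iff.mp hab.symm with ⟨rfl, rfl⟩ | ⟨rfl, rfl⟩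
        · exact ⟨by simp [Walk.verts], by simp [Walk.verts, hst]⟩
        · exact ⟨by simp [Walk.verts, hst], by simp [Walk.verts]⟩
      · have := mem_verts_of_mem_edges p he hab
        exact ⟨by simp [Walk.verts, this.1], by simp [Walk.verts, this.2]⟩

theorem edges_nodup_of_verts_nodup :
    ∀ {u v : V} (p : G.Walk u v), p.verts.Nodup → p.edges.Nodup
  | _, _, .nil v, h => by simp [Walk.edges]
  | u, _, .cons e he p, h => by
      simp only [Walk.verts, List.nodup_cons] at h
      simp only [Walk.edges, List.nodup_cons]
      refine ⟨fun hmem => ?_, edges_nodup_of_verts_nodup p h.2⟩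
      exact h.1 (mem_verts_of_mem_edges p hmem he).1

end W

/-! ### Reachability within a set of edges -/

/-- Reachability using only edges in the finite set `A`. -/
inductive Within (G : Multigraph V E) (A : Finset E) : V → V → Prop
  | refl (v : V) : Within G A v v
  | tail {u v w : V} (e : E) (he : e ∈ A) (hvw : G.ends e = s(v, w)) (h : Within G A u v) :
      Within G A u w

namespace Within

theorem trans {A : Finset E} {u v w : V} (h1 : Within G A u v) (h2 : Within G A v w) :
    Within G A u w := by
  induction h2 with
  | refl => exact h1
  | tail e he hvw h ih => exact .tail e he hvw ih

theorem single {A : Finset E} {e : E} {u v : V} (he : e ∈ A) (h : G.ends e = s(u, v)) :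
    Within G A u v := .tail e he h (.refl u)

theorem symm {A : Finset E} {u v : V} (h : Within G A u v) : Within G A v u := by
  induction h with
  | refl => exact .refl _
  | tail e he hvw h ih => exact (single he (Sym2.eq_swap ▸ hvw)).trans ih

theorem mono {A B : Finset E} (hAB : A ⊆ B) {u v : V} (h : Within G A u v) :
    Within G B u v := by
  induction h with
  | refl => exact .refl _
  | tail e he hvw h ih => exact .tail e (hAB he) hvw ih

end Within

/-- The connectivity setoid of the subgraph on the edge set `A`. -/
def withinSetoid (G : Multigraph V E) (A : Finset E) : Setoid V :=
  ⟨Within G A, ⟨.refl, Within.symm, Within.trans⟩⟩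

theorem within_exists_path [DecidableEq V] {A : Finset E} {u v : V} (h : Within G A u v) :
    ∃ p : G.Walk u v, p.verts.Nodup ∧ ∀ e ∈ p.edges, e ∈ A := by
  induction h with
  | refl => exact ⟨.nil _, by simp [Walk.verts], by simp [Walk.edges]⟩
  | @tail v w e he hvw h ih =>
      obtain ⟨p, hnd, hA⟩ := ih
      by_cases hw : w ∈ p.verts
      · refine ⟨W.takeUntil p w hw, ?_, fun e' he' => ?_⟩
        · exact (W.verts_takeUntil_sublist p w hw).nodup hnd
        · exact hA e' ((W.edges_takeUntil_sublist p w hw).mem he')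
      · refine ⟨W.snoc p e hvw, ?_, fun e' he' => ?_⟩
        · rw [W.verts_snoc]
          simp only [List.nodup_append, List.nodup_cons]
          exact ⟨hnd, by simp, by simp [List.disjoint_singleton]; intro a ha h; exact hw (h ▸ ha)⟩
        · rw [W.edges_snoc] at he'
          rcases List.mem_append.mp he' with h' | h'
          · exact hA e' h'
          · simp only [List.mem_singleton] at h'; exact h' ▸ he

/-! ### Component counting -/

section Counting

variable [Fintype V] [Fintype E]

/-- Number of connected components of the subgraph on edge set `A`. -/
noncomputable def ncomp (G : Multigraph V E) (A : Finset E) : ℕ :=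
  @Fintype.card (Quotient (withinSetoid G A))
    (@Quotient.fintype _ _ (withinSetoid G A) (Classical.decRel _))

theorem ncomp_def (G : Multigraph V E) (A : Finset E)
    [inst : Fintype (Quotient (withinSetoid G A))] :
    ncomp G A = Fintype.card (Quotient (withinSetoid G A)) := by
  unfold ncomp; congr 1; exact Subsingleton.elim _ _

theorem ncomp_pos (G : Multigraph V E) (A : Finset E) [Nonempty V] : 0 < ncomp G A := by
  classical
  rw [ncomp_def]
  have : Nonempty (Quotient (withinSetoid G A)) :=
    ⟨Quotient.mk _ (Classical.arbitrary V)⟩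
  exact Fintype.card_pos

theorem ncomp_empty (G : Multigraph V E) : ncomp G (∅ : Finset E) = Fintype.card V := by
  classical
  rw [ncomp_def]
  have hb : Function.Bijective (Quotient.mk (withinSetoid G ∅)) := by
    constructor
    · intro a b hab
      have := Quotient.exact hab
      have h : Within G ∅ a b := this
      cases h with
      | refl => rfl
      | tail e he hvw h => simp at he
    · intro x; exact Quotient.exists_rep x
  exact (Fintype.card_of_bijective hb).symm

theorem quot_map_exists [DecidableEq E] {A : Finset E} {e : E} {a b u v : V}
    (hab : G.ends e = s(a, b)) (h : Within G (insert e A) u v) :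
    Within G A u v ∨ (Within G A u a ∧ Within G A b v) ∨
      (Within G A u b ∧ Within G A a v) := by
  classical
  induction h with
  | refl => exact Or.inl (.refl _)
  | @tail v w f hf hvw h ih =>
      rcases Finset.mem_insert.mp hf with rfl | hfA
      · -- the new edge
        rw [hab] at hvw
        rcases Sym2.eq_iff.mp hvw with ⟨rfl, rfl⟩ | ⟨rfl, rfl⟩
        · rcases ih with h1 | ⟨h1, h2⟩ | ⟨h1, h2⟩
          · exact Or.inr (Or.inl ⟨h1, .refl _⟩)
          · exact Or.inr (Or.inl ⟨h1, .refl _⟩)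
          · exact Or.inl h1
        · rcases ih with h1 | ⟨h1, h2⟩ | ⟨h1, h2⟩
          · exact Or.inr (Or.inr ⟨h1, .refl _⟩)
          · exact Or.inl h1
          · exact Or.inr (Or.inr ⟨h1, .refl _⟩)
      · rcases ih with h1 | ⟨h1, h2⟩ | ⟨h1, h2⟩
        · exact Or.inl (.tail f hfA hvw h1)
        · exact Or.inr (Or.inl ⟨h1, h2.trans (Within.single hfA hvw)⟩)
        · exact Or.inr (Or.inr ⟨h1, h2.trans (Within.single hfA hvw)⟩)

theorem ncomp_le_insert (G : Multigraph V E) (A : Finset E) (e : E) [DecidableEq E] :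
    ncomp G A ≤ ncomp G (insert e A) + 1 := by
  classical
  obtain ⟨a, b, hab⟩ := sym2_exists_eq (G.ends e)
  rw [ncomp_def, ncomp_def]
  set s := withinSetoid G A
  set s' := withinSetoid G (insert e A)
  let φ : Quotient s → Quotient s' :=
    Quotient.map id (fun x y h => Within.mono (Finset.subset_insert e A) h)
  let ψ : Quotient s → Quotient s' ⊕ Unit := fun x =>
    if x = Quotient.mk s a then Sum.inr () else Sum.inl (φ x)
  have hinj : Function.Injective ψ := by
    intro x y hxy
    by_cases hx : x = Quotient.mk s a <;> by_cases hy : y = Quotient.mk s a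
    · rw [hx, hy]
    · simp only [ψ, if_pos hx, if_neg hy] at hxy; exact absurd hxy.symm (by simp)
    · simp only [ψ, if_neg hx, if_pos hy] at hxy; exact absurd hxy (by simp)
    · simp only [ψ, if_neg hx, if_neg hy, Sum.inl.injEq] at hxy
      obtain ⟨p, rfl⟩ := Quotient.exists_rep x
      obtain ⟨q, rfl⟩ := Quotient.exists_rep y
      have h : Within G (insert e A) p q := Quotient.exact hxy
      rcases quot_map_exists hab h with h1 | ⟨h1, h2⟩ | ⟨h1, h2⟩
      · exact Quotient.sound h1
      · exact absurd (Quotient.sound h1) hx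
      · exact absurd (Quotient.sound h2).symm hy
  calc Fintype.card (Quotient s) ≤ Fintype.card (Quotient s' ⊕ Unit) :=
        Fintype.card_le_of_injective ψ hinj
    _ = Fintype.card (Quotient s') + 1 := by simp

theorem insert_ncomp_lt (G : Multigraph V E) (A : Finset E) (e : E) [DecidableEq E]
    {a b : V} (hab : G.ends e = s(a, b)) (hnot : ¬ Within G A a b) :
    ncomp G (insert e A) + 1 ≤ ncomp G A := by
  classical
  rw [ncomp_def, ncomp_def]
  set s := withinSetoid G A
  set s' := withinSetoid G (insert e A)
  let φ : Quotient s → Quotient s' :=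
    Quotient.map id (fun x y h => Within.mono (Finset.subset_insert e A) h)
  have hφsurj : Function.Surjective φ := by
    intro z; obtain ⟨p, rfl⟩ := Quotient.exists_rep z; exact ⟨Quotient.mk s p, rfl⟩
  have hba : Quotient.mk s' b = Quotient.mk s' a :=
    Quotient.sound ((Within.single (Finset.mem_insert_self e A) hab).symm :
      Within G (insert e A) b a)
  let j : Quotient s' → Quotient s := fun z =>
    if Function.surjInv hφsurj z = Quotient.mk s a then Quotient.mk s b
    else Function.surjInv hφsurj z
  have hφj : ∀ z, φ (j z) = z := by
    intro z
    by_cases h : Function.surjInv hφsurj z = Quotient.mk s a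
    · simp only [j, if_pos h]
      have h1 : φ (Quotient.mk s b) = Quotient.mk s' b := rfl
      have h2 : φ (Quotient.mk s a) = Quotient.mk s' a := rfl
      rw [h1, hba, ← h2, ← h, Function.surjInv_eq hφsurj z]
    · simp only [j, if_neg h, Function.surjInv_eq hφsurj z]
  have hjinj : Function.Injective j := by
    intro x y hxy
    have := congrArg φ hxy
    rwa [hφj, hφj] at this
  have hjne : ∀ z, j z ≠ Quotient.mk s a := by
    intro z
    by_cases h : Function.surjInv hφsurj z = Quotient.mk s a
    · simp only [j, if_pos h]
      intro hq
      exact hnot ((Quotient.exact hq : Within G A b a).symm)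
    · simp only [j, if_neg h]; exact h
  let j' : Quotient s' → {x : Quotient s // x ≠ Quotient.mk s a} := fun z => ⟨j z, hjne z⟩
  have hj'inj : Function.Injective j' := fun x y h => hjinj (congrArg Subtype.val h)
  have hcard : Fintype.card (Quotient s') ≤
      Fintype.card {x : Quotient s // x ≠ Quotient.mk s a} :=
    Fintype.card_le_of_injective j' hj'inj
  have hne : Fintype.card {x : Quotient s // ¬ x = Quotient.mk s a} =
      Fintype.card (Quotient s) - 1 := by
    rw [Fintype.card_subtype_compl, Fintype.card_subtype_eq]
  have hne' : Fintype.card {x : Quotient s // x ≠ Quotient.mk s a} =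
      Fintype.card {x : Quotient s // ¬ x = Quotient.mk s a} := rfl
  have : Nonempty (Quotient s) := ⟨Quotient.mk s a⟩
  have hpos : 0 < Fintype.card (Quotient s) := Fintype.card_pos
  omega

theorem card_V_le (G : Multigraph V E) [DecidableEq E] (A : Finset E) :
    Fintype.card V ≤ A.card + ncomp G A := by
  classical
  induction A using Finset.induction_on with
  | empty => rw [ncomp_empty]; simp
  | @insert e A he ih =>
      have h1 := ncomp_le_insert G A e
      have h2 : (insert e A).card = A.card + 1 := Finset.card_insert_of_notMem he
      omega

/-- No simple cycle uses only edges of `A`. -/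
def CycFree (G : Multigraph V E) [DecidableEq E] (A : Finset E) : Prop :=
  ∀ S : Finset E, S ⊆ A → ¬ G.IsSimpleCycleOn S

theorem cycfree_bound (G : Multigraph V E) [DecidableEq E] [DecidableEq V] (A : Finset E)
    (hcf : CycFree G A) : A.card + ncomp G A ≤ Fintype.card V := by
  classical
  induction A using Finset.induction_on with
  | empty => rw [ncomp_empty]; simp
  | @insert e A he ih =>
      have hA : CycFree G A := fun S hS => hcf S (hS.trans (Finset.subset_insert e A))
      obtain ⟨a, b, hab⟩ := sym2_exists_eq (G.ends e)
      have hnot : ¬ Within G A a b := by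
        intro hW
        obtain ⟨p, hnd, hsub⟩ := within_exists_path hW
        have hepe : e ∉ p.edges := fun hmem => he (hsub e hmem)
        refine hcf ((W.snoc p e (Sym2.eq_swap ▸ hab)).edges.toFinset) ?_ ⟨a, _, ?_, ?_, ?_, rfl⟩
        · intro x hx
          rw [List.mem_toFinset, W.edges_snoc] at hx
          rcases List.mem_append.mp hx with h' | h'
          · exact Finset.mem_insert.mpr (Or.inr (hsub x h'))
          · simp only [List.mem_singleton] at h'
            exact h' ▸ Finset.mem_insert_self e A
        · rw [W.edges_snoc]; simp
        · rw [W.edges_snoc]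
          refine List.Nodup.append (W.edges_nodup_of_verts_nodup p hnd) (by simp) ?_
          simpa [List.disjoint_singleton] using hepe
        · rw [W.verts_snoc, List.dropLast_concat]
          exact hnd
      have h1 := insert_ncomp_lt G A e hab hnot
      have h2 : (insert e A).card = A.card + 1 := Finset.card_insert_of_notMem he
      have h3 := ih hA
      omega

theorem reach_to_within {u v : V} (h : G.ReachAvoid ∅ u v) :
    Within G (Finset.univ : Finset E) u v := by
  induction h with
  | refl => exact .refl _
  | tail e he hvw h ih => exact .tail e (Finset.mem_univ e) hvw ih

theorem ncomp_univ_of_conn (G : Multigraph V E) [Nonempty V] (h : G.Connected) :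
    ncomp G (Finset.univ : Finset E) = 1 := by
  classical
  rw [ncomp_def]
  rw [Fintype.card_eq_one_iff]
  refine ⟨Quotient.mk _ (Classical.arbitrary V), ?_⟩
  intro x
  obtain ⟨p, rfl⟩ := Quotient.exists_rep x
  exact Quotient.sound (reach_to_within (h p (Classical.arbitrary V)))

theorem tree_card (G : Multigraph V E) [DecidableEq E] [DecidableEq V] [Nonempty V]
    (h : G.IsTree) : Fintype.card E + 1 = Fintype.card V := by
  classical
  have h1 := card_V_le G (Finset.univ : Finset E)
  have h2 := cycfree_bound G (Finset.univ : Finset E) (fun S _ => h.2 S)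
  have h3 := ncomp_univ_of_conn G h.1
  rw [Finset.card_univ] at h1 h2
  omega

end Counting

/-! ### Structure of small cycles -/

theorem diwalk_eq_of_edges_nil {D : Multidigraph V E} :
    ∀ {u v : V} (p : D.DiWalk u v), p.edges = [] → u = v
  | _, _, .nil v, _ => rfl
  | _, _, .cons e hs ht p, hn => by simp [Multidigraph.DiWalk.edges] at hn

/-- A tree (no simple cycles) has no loop edge. -/
theorem no_loop_of_acyclic [DecidableEq E] {G : Multigraph V E}
    (h : ∀ S : Finset E, ¬ G.IsSimpleCycleOn S) (e : E) (a : V)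
    (he : G.ends e = s(a, a)) : False :=
  h {e} ⟨a, .cons e he (.nil a), by simp [Walk.edges], by simp [Walk.edges],
    by simp [Walk.verts], by simp [Walk.edges]⟩

/-- Two antiparallel distinct edges form a simple cycle. -/
theorem two_cycle [DecidableEq E] {G : Multigraph V E} {e₁ e₂ : E} {a b : V}
    (hne : e₁ ≠ e₂) (hab : a ≠ b) (h₁ : G.ends e₁ = s(a, b)) (h₂ : G.ends e₂ = s(b, a)) :
    G.IsSimpleCycleOn {e₁, e₂} :=
  ⟨a, .cons e₁ h₁ (.cons e₂ h₂ (.nil a)), by simp [Walk.edges],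
    by simp [Walk.edges, hne], by simp [Walk.verts, hab], by simp [Walk.edges]⟩

/-- In a loop-free multigraph, every simple cycle has at least two edges. -/
theorem two_le_card_cycle [DecidableEq E] {G : Multigraph V E} {S : Finset E}
    (hS : G.IsSimpleCycleOn S) (hnl : ∀ (e : E) (a : V), G.ends e ≠ s(a, a)) :
    2 ≤ S.card := by
  obtain ⟨v, p, hne, hnd, hvnd, hSeq⟩ := hS
  rw [← hSeq, List.toFinset_card_of_nodup hnd]
  rcases hlen : p.edges with _ | ⟨e, l⟩
  · exact absurd hlen hne
  rcases l with _ | ⟨e', l'⟩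
  · -- single edge: a loop
    exfalso
    cases p with
    | nil => simp [Walk.edges] at hlen
    | @cons _ m _ f hf q =>
        have : f = e ∧ q.edges = [] := by
          simpa [Walk.edges] using hlen
        have hm : m = v := W.eq_of_edges_nil q this.2
        exact hnl f v (by rw [hf, hm])
  · simp

/-- Structure of a directed simple cycle with exactly two edges. -/
theorem dicycle_two [DecidableEq E] {D : Multidigraph V E} {S : Finset E}
    (h : D.IsDiCycleOn S) (hcard : S.card = 2) :
    ∃ (a b : E) (x y : V), a ≠ b ∧ S = {a, b} ∧
      D.src a = x ∧ D.tgt a = y ∧ D.src b = y ∧ D.tgt b = x := by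
  obtain ⟨v, p, hne, hnd, hvnd, hSeq⟩ := h
  have hlen : p.edges.length = 2 := by
    rw [← List.toFinset_card_of_nodup hnd, hSeq, hcard]
  cases p with
  | nil => simp [Multidigraph.DiWalk.edges] at hlen
  | @cons _ m _ e hs htg q =>
      cases q with
      | nil => simp [Multidigraph.DiWalk.edges] at hlen
      | @cons _ m' _ e₂ hs₂ ht₂ r =>
          have hr : r.edges = [] := by
            simpa [Multidigraph.DiWalk.edges] using hlen
          have hm : m' = v := diwalk_eq_of_edges_nil r hr
          subst hm
          refine ⟨e, e₂, m', m, ?_, ?_, hs, htg, hs₂, ht₂⟩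
          · have hnd' : (e :: e₂ :: r.edges).Nodup := hnd
            rw [hr] at hnd'
            simp only [List.nodup_cons, List.mem_singleton, List.mem_cons] at hnd'
            exact fun h => hnd'.1 (by simp [h])
          · rw [← hSeq]
            show (e :: e₂ :: r.edges).toFinset = {e, e₂}
            rw [hr]
            simp

/-- Choose an element of a nonempty finset, congruently in the set. -/
noncomputable def pick {α : Type} (S : Finset α) (h : S.Nonempty) : α := h.choose

theorem pick_mem {α : Type} (S : Finset α) (h : S.Nonempty) : pick S h ∈ S := h.choose_spec

theorem pick_congr {α : Type} {S T : Finset α} (h : S = T) (h1 : S.Nonempty)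
    (h2 : T.Nonempty) : pick S h1 = pick T h2 := by subst h; rfl

end Stmt11
/-- In the setting of Statement 10, the induced bijection `f_π` from
the vertices of `t` to the vertices of `t'` (sending `ρ` to `ρ'`) reverses adjacency:
there is an edge directed from `v` to `w` in `t` iff there is an edge directed from
`f_π(w)` to `f_π(v)` in `t'`.  In particular `f_π` is an anti-isomorphism of rooted
directed trees. -/
theorem stmt_11 {V E V' E' : Type} [Fintype V] [Fintype V'] [Fintype E] [Fintype E']
    [DecidableEq V] [DecidableEq V'] [DecidableEq E] [DecidableEq E']
    (t : Multidigraph V E) (t' : Multidigraph V' E') (ρ : V) (ρ' : V')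
    (ht : t.toMultigraph.IsTree) (ht' : t'.toMultigraph.IsTree)
    (hV : 1 < Fintype.card V) (hV' : 1 < Fintype.card V')
    (hρ : t.toMultigraph.degree ρ = 1) (hρ' : t'.toMultigraph.degree ρ' = 1)
    (hdeg : ∀ v : V, ¬ (t.indeg v = 1 ∧ t.outdeg v = 1))
    (hdeg' : ∀ v' : V', ¬ (t'.indeg v' = 1 ∧ t'.outdeg v' = 1))
    (σ : Setoid (V ⊕ {x : V' // x ≠ ρ'}))
    (hsolid₁ : ∀ a b : V, σ.r (Sum.inl a) (Sum.inl b) → a = b)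
    (hsolid₂ : ∀ a b : V', σ.r (wedgeJ ρ ρ' a) (wedgeJ ρ ρ' b) → a = b)
    (hcactus : ((t.wedge t' ρ ρ').quot σ).IsOrientedCactus)
    (f : V → V') (hfbij : Function.Bijective f)
    (hf : ∀ v : V, σ.r (Sum.inl v) (wedgeJ ρ ρ' (f v))) :
    ∀ v w : V,
      (∃ e : E, t.src e = v ∧ t.tgt e = w) ↔
      (∃ e' : E', t'.src e' = f w ∧ t'.tgt e' = f v) := by
  classical
  open Stmt11 in
  letI : Fintype (Quotient σ) := Quotient.fintype σ
  set Wd := t.wedge t' ρ ρ' with hWd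
  set D := Wd.quot σ with hDdef
  set GQ := D.toMultigraph with hGQdef
  have hql : ∀ a b : V, Quotient.mk σ (Sum.inl a) = Quotient.mk σ (Sum.inl b) → a = b :=
    fun a b h => hsolid₁ a b (Quotient.exact h)
  have hqw : ∀ a b : V',
      Quotient.mk σ (wedgeJ ρ ρ' a) = Quotient.mk σ (wedgeJ ρ ρ' b) → a = b :=
    fun a b h => hsolid₂ a b (Quotient.exact h)
  have hfq : ∀ v : V, Quotient.mk σ (Sum.inl v) = Quotient.mk σ (wedgeJ ρ ρ' (f v)) :=
    fun v => Quotient.sound (hf v)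
  have hst : ∀ e : E, t.src e ≠ t.tgt e := by
    intro e h
    exact Stmt11.no_loop_of_acyclic ht.2 e (t.tgt e)
      (show s(t.src e, t.tgt e) = s(t.tgt e, t.tgt e) by rw [h])
  have hst' : ∀ e : E', t'.src e ≠ t'.tgt e := by
    intro e h
    exact Stmt11.no_loop_of_acyclic ht'.2 e (t'.tgt e)
      (show s(t'.src e, t'.tgt e) = s(t'.tgt e, t'.tgt e) by rw [h])
  have hsrcD_inl : ∀ e : E, D.src (Sum.inl e) = Quotient.mk σ (Sum.inl (t.src e)) :=
    fun e => rfl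
  have htgtD_inl : ∀ e : E, D.tgt (Sum.inl e) = Quotient.mk σ (Sum.inl (t.tgt e)) :=
    fun e => rfl
  have hsrcD_inr : ∀ e : E', D.src (Sum.inr e) = Quotient.mk σ (wedgeJ ρ ρ' (t'.src e)) :=
    fun e => rfl
  have htgtD_inr : ∀ e : E', D.tgt (Sum.inr e) = Quotient.mk σ (wedgeJ ρ ρ' (t'.tgt e)) :=
    fun e => rfl
  have hendsGQ : ∀ x : E ⊕ E', GQ.ends x = s(D.src x, D.tgt x) := fun x => rfl
  -- no loops in the quotient
  have hnlQ : ∀ (x : E ⊕ E') (a : Quotient σ), GQ.ends x ≠ s(a, a) := by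
    intro x a h
    rw [hendsGQ] at h
    have hsteq : D.src x = D.tgt x := by
      rcases Sym2.eq_iff.mp h with ⟨h1, h2⟩ | ⟨h1, h2⟩ <;> rw [h1, h2]
    cases x with
    | inl e => exact hst e (hql _ _ ((hsrcD_inl e) ▸ (htgtD_inl e) ▸ hsteq))
    | inr e => exact hst' e (hqw _ _ ((hsrcD_inr e) ▸ (htgtD_inr e) ▸ hsteq))
  -- cardinalities
  have hNV : Nonempty V := Fintype.card_pos_iff.mp (by omega)
  have hNV' : Nonempty V' := Fintype.card_pos_iff.mp (by omega)
  have hbij : Function.Bijective (fun v : V => Quotient.mk σ (Sum.inl v)) := by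
    constructor
    · intro a b h; exact hql a b h
    · intro x
      obtain ⟨y, rfl⟩ := Quotient.exists_rep x
      cases y with
      | inl v => exact ⟨v, rfl⟩
      | inr z =>
          obtain ⟨x', hx'⟩ := z
          obtain ⟨v, hv⟩ := hfbij.2 x'
          refine ⟨v, ?_⟩
          show Quotient.mk σ (Sum.inl v) = _
          have h1 := hfq v
          rw [hv] at h1
          rw [h1]
          congr 1
          simp [wedgeJ, hx']
  have hcardQ : Fintype.card (Quotient σ) = Fintype.card V :=
    (Fintype.card_of_bijective hbij).symm
  have hcardV' : Fintype.card V = Fintype.card V' := Fintype.card_of_bijective hfbij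
  have htreeE : Fintype.card E + 1 = Fintype.card V := Stmt11.tree_card _ ht
  have htreeE' : Fintype.card E' + 1 = Fintype.card V' := Stmt11.tree_card _ ht'
  have hcardET : Fintype.card (E ⊕ E') = Fintype.card E + Fintype.card E' :=
    Fintype.card_sum
  -- the cycle structure
  have hcyc := hcactus.1.2
  let cyc : E ⊕ E' → Finset (E ⊕ E') := fun x => (hcyc x).choose
  have cyc_spec : ∀ x, GQ.IsSimpleCycleOn (cyc x) ∧ x ∈ cyc x := fun x =>
    (hcyc x).choose_spec.1
  have cyc_uniq : ∀ (x : E ⊕ E') (S : Finset (E ⊕ E')), GQ.IsSimpleCycleOn S → x ∈ S →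
      S = cyc x := fun x S h1 h2 => (hcyc x).choose_spec.2 S ⟨h1, h2⟩
  have key2 : ∀ x y, x ∈ cyc y → cyc x = cyc y := fun x y hx =>
    (cyc_uniq x (cyc y) (cyc_spec y).1 hx).symm
  let r : E ⊕ E' → E ⊕ E' := fun x => Stmt11.pick (cyc x) ⟨x, (cyc_spec x).2⟩
  have r_mem : ∀ x, r x ∈ cyc x := fun x => Stmt11.pick_mem _ _
  have cyc_r : ∀ x, cyc (r x) = cyc x := fun x => key2 _ _ (r_mem x)
  have r_congr : ∀ x y, cyc x = cyc y → r x = r y := fun x y h =>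
    Stmt11.pick_congr h _ _
  set R : Finset (E ⊕ E') := Finset.univ.image r with hRdef
  have mem_R : ∀ x, x ∈ R ↔ r x = x := by
    intro x
    constructor
    · intro hx
      obtain ⟨y, -, hy⟩ := Finset.mem_image.mp hx
      rw [← hy]
      exact r_congr _ _ (cyc_r y)
    · intro hx
      exact Finset.mem_image.mpr ⟨x, Finset.mem_univ x, hx⟩
  have hdisj : ∀ a ∈ R, ∀ b ∈ R, a ≠ b → Disjoint (cyc a) (cyc b) := by
    intro a ha b hb hab
    rw [Finset.disjoint_left]
    intro x hxa hxb
    have h1 : cyc a = cyc b := (key2 x a hxa).symm.trans (key2 x b hxb)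
    exact hab (((mem_R a).mp ha).symm.trans ((r_congr a b h1).trans ((mem_R b).mp hb)))
  have hcover : R.biUnion cyc = Finset.univ := by
    apply Finset.eq_univ_of_forall
    intro x
    refine Finset.mem_biUnion.mpr ⟨r x, (mem_R (r x)).mpr (r_congr _ _ (cyc_r x)), ?_⟩
    rw [cyc_r]
    exact (cyc_spec x).2
  have hsum : ∑ a ∈ R, (cyc a).card = Fintype.card (E ⊕ E') := by
    rw [← Finset.card_biUnion hdisj, hcover, Finset.card_univ]
  have h2le : ∀ x, 2 ≤ (cyc x).card := fun x =>
    Stmt11.two_le_card_cycle (cyc_spec x).1 hnlQ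
  -- cycle-freeness of the complement of representatives
  have hfree : Stmt11.CycFree GQ (Finset.univ \ R) := by
    intro S hS hSc
    obtain ⟨x, hxS⟩ : ∃ x, x ∈ S := by
      obtain ⟨v, p, hne, -, -, hSeq⟩ := hSc
      obtain ⟨x, hx⟩ := List.exists_mem_of_ne_nil _ hne
      exact ⟨x, hSeq ▸ List.mem_toFinset.mpr hx⟩
    have hSx : S = cyc x := cyc_uniq x S hSc hxS
    have h1 : r x ∈ S := hSx ▸ r_mem x
    have h2 := hS h1
    rw [Finset.mem_sdiff] at h2
    exact h2.2 ((mem_R (r x)).mpr (r_congr _ _ (cyc_r x)))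
  have hNQ : Nonempty (Quotient σ) := ⟨Quotient.mk σ (Sum.inl ρ)⟩
  have hbound := Stmt11.cycfree_bound GQ (Finset.univ \ R) hfree
  have hpos := Stmt11.ncomp_pos GQ (Finset.univ \ R)
  have hsd : (Finset.univ \ R).card = Fintype.card (E ⊕ E') - R.card := by
    rw [Finset.card_sdiff_of_subset (Finset.subset_univ R), Finset.card_univ]
  have hRle : R.card ≤ Fintype.card (E ⊕ E') := by
    simpa using Finset.card_le_univ R
  have h2R : 2 * R.card ≤ ∑ a ∈ R, (cyc a).card := by
    have := Finset.card_nsmul_le_sum R (fun a => (cyc a).card) 2 (fun x _ => h2le x)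
    simpa [mul_comm] using this
  -- all cycles have exactly two edges
  have hall2 : ∀ x ∈ R, (cyc x).card = 2 := by
    by_contra hcon
    push_neg at hcon
    obtain ⟨x₀, hx₀, hx₀ne⟩ := hcon
    have hlt : ∑ a ∈ R, (2 : ℕ) < ∑ a ∈ R, (cyc a).card := by
      refine Finset.sum_lt_sum (fun i _ => h2le i) ⟨x₀, hx₀, ?_⟩
      exact lt_of_le_of_ne (h2le x₀) (fun h => hx₀ne h.symm)
    rw [Finset.sum_const, smul_eq_mul] at hlt
    rw [hcardQ] at hbound
    omega
  have hcard2 : ∀ x, (cyc x).card = 2 := by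
    intro x
    rw [← cyc_r x]
    exact hall2 (r x) ((mem_R (r x)).mpr (r_congr _ _ (cyc_r x)))
  -- local analysis of the two-edge cycles
  have analyze : ∀ x : E ⊕ E', ∃ y : E ⊕ E',
      x ≠ y ∧ D.src y = D.tgt x ∧ D.tgt y = D.src x := by
    intro x
    have hdc : D.IsDiCycleOn (cyc x) := hcactus.2 _ (cyc_spec x).1
    obtain ⟨a, b, α, β, hab, hSab, hsa, hta, hsb, htb⟩ :=
      Stmt11.dicycle_two hdc (hcard2 x)
    have hx : x ∈ ({a, b} : Finset (E ⊕ E')) := hSab ▸ (cyc_spec x).2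
    rcases Finset.mem_insert.mp hx with rfl | hx
    · exact ⟨b, hab, hsb.trans hta.symm, htb.trans hsa.symm⟩
    · rw [Finset.mem_singleton] at hx
      subst hx
      exact ⟨a, fun h => hab h.symm, hsa.trans htb.symm, hta.trans hsb.symm⟩
  intro v w
  constructor
  · rintro ⟨e, hsv, htw⟩
    obtain ⟨y, hxy, hsy, hty⟩ := analyze (Sum.inl e)
    cases y with
    | inl e₂ =>
        exfalso
        rw [hsrcD_inl, htgtD_inl] at hsy
        rw [htgtD_inl, hsrcD_inl] at hty
        have h1 : t.src e₂ = t.tgt e := hql _ _ hsy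
        have h2 : t.tgt e₂ = t.src e := hql _ _ hty
        have hee : e ≠ e₂ := fun h => hxy (by rw [h])
        exact ht.2 {e, e₂} (Stmt11.two_cycle hee (hst e) rfl
          (show s(t.src e₂, t.tgt e₂) = s(t.tgt e, t.src e) by rw [h1, h2]))
    | inr e' =>
        rw [hsrcD_inr, htgtD_inl] at hsy
        rw [htgtD_inr, hsrcD_inl] at hty
        have h1 : t'.src e' = f (t.tgt e) := hqw _ _ (hsy.trans (hfq (t.tgt e)))
        have h2 : t'.tgt e' = f (t.src e) := hqw _ _ (hty.trans (hfq (t.src e)))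
        exact ⟨e', by rw [h1, htw], by rw [h2, hsv]⟩
  · rintro ⟨e', hes, het⟩
    obtain ⟨y, hxy, hsy, hty⟩ := analyze (Sum.inr e')
    cases y with
    | inr e₂ =>
        exfalso
        rw [hsrcD_inr, htgtD_inr] at hsy
        rw [htgtD_inr, hsrcD_inr] at hty
        have h1 : t'.src e₂ = t'.tgt e' := hqw _ _ hsy
        have h2 : t'.tgt e₂ = t'.src e' := hqw _ _ hty
        have hee : e' ≠ e₂ := fun h => hxy (by rw [h])
        exact ht'.2 {e', e₂} (Stmt11.two_cycle hee (hst' e') rfl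
          (show s(t'.src e₂, t'.tgt e₂) = s(t'.tgt e', t'.src e') by rw [h1, h2]))
    | inl e =>
        rw [hsrcD_inl, htgtD_inr] at hsy
        rw [htgtD_inl, hsrcD_inr] at hty
        rw [het] at hsy
        rw [hes] at hty
        have h1 : t.src e = v := hql _ _ (hsy.trans (hfq v).symm)
        have h2 : t.tgt e = w := hql _ _ (hty.trans (hfq w).symm)
        exact ⟨e, h1, h2⟩
end

section
/- Let t₁, …, tₙ (n ≥ 3) be finite trees, each with at least two vertices and a designated root of degree one, and let T be the graph obtained from their disjoint union by identifying all the roots to a single vertex ρ. Let π be a partition of the vertex set of T whose restriction to the vertex set of each t_i is the discrete partition. Suppose there are indices i, j, k with j ≠ k and i ∉ {j, k}, and vertices v, w of t_i distinct from ρ, v' of t_j distinct from ρ, and w' of t_k distinct from ρ, such that v and v' lie in the same block of π and w and w' lie in the same block of π. Then the quotient T^π is not a cactus. -/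
set_option autoImplicit false

/-! ## Auxiliary walk lemmas for stmt 15 -/

namespace Multigraph

namespace Walk

variable {V E : Type} {G : Multigraph V E}

theorem verts_ne_nil : ∀ {u v : V} (p : G.Walk u v), p.verts ≠ []
  | _, _, .nil _ => by simp [verts]
  | _, _, .cons _ _ _ => by simp [verts]

theorem start_mem_verts : ∀ {u v : V} (p : G.Walk u v), u ∈ p.verts
  | _, _, .nil _ => by simp [verts]
  | _, _, .cons _ _ _ => by simp [verts]

theorem end_mem_verts : ∀ {u v : V} (p : G.Walk u v), v ∈ p.verts
  | _, _, .nil _ => by simp [verts]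
  | _, _, .cons _ _ p => by simp [verts, end_mem_verts p]

theorem verts_eq_cons : ∀ {u v : V} (p : G.Walk u v), p.verts = u :: p.verts.tail
  | _, _, .nil _ => rfl
  | _, _, .cons _ _ _ => rfl

theorem end_mem_verts_tail : ∀ {u v : V} (p : G.Walk u v), u ≠ v → v ∈ p.verts.tail
  | _, _, .nil _, h => absurd rfl h
  | _, _, .cons _ _ p, _ => by simpa [verts] using end_mem_verts p

theorem eq_of_edges_eq_nil : ∀ {u v : V} (p : G.Walk u v), p.edges = [] → u = v
  | _, _, .nil _, _ => rfl
  | _, _, .cons _ _ _, h => by simp [edges] at h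

theorem mem_verts_of_mem_edges : ∀ {u v : V} (p : G.Walk u v) {e : E} {a b : V},
    e ∈ p.edges → G.ends e = s(a, b) → a ∈ p.verts
  | _, _, .nil _, _, _, _, he, _ => by simp [edges] at he
  | u, w, .cons e' huv p, e, a, b, he, hab => by
    simp only [edges, List.mem_cons] at he
    rcases he with rfl | he
    · rw [huv] at hab
      rw [Sym2.eq_iff] at hab
      simp only [verts, List.mem_cons]
      rcases hab with ⟨rfl, _⟩ | ⟨_, rfl⟩
      · exact Or.inl rfl
      · exact Or.inr (start_mem_verts p)
    · simp only [verts, List.mem_cons]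
      exact Or.inr (mem_verts_of_mem_edges p he hab)

theorem edges_nodup_of_verts_nodup : ∀ {u v : V} (p : G.Walk u v),
    p.verts.Nodup → p.edges.Nodup
  | _, _, .nil _, _ => by simp [edges]
  | u, w, .cons e huv p, h => by
    simp only [verts, List.nodup_cons] at h
    simp only [edges, List.nodup_cons]
    refine ⟨fun he => h.1 ?_, edges_nodup_of_verts_nodup p h.2⟩
    exact mem_verts_of_mem_edges p he huv

/-- Append an edge at the end of a walk. -/
def concat : ∀ {u v w : V}, G.Walk u v → ∀ (e : E), G.ends e = s(v, w) → G.Walk u w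
  | _, _, w, .nil v, e, h => .cons e h (.nil w)
  | _, _, w, .cons e' h' p, e, h => .cons e' h' (p.concat e h)

theorem verts_concat : ∀ {u v w : V} (p : G.Walk u v) (e : E) (h : G.ends e = s(v, w)),
    (p.concat e h).verts = p.verts ++ [w]
  | _, _, _, .nil _, _, _ => rfl
  | _, _, _, .cons _ _ p, e, h => by simp [concat, verts, verts_concat p e h]

theorem edges_concat : ∀ {u v w : V} (p : G.Walk u v) (e : E) (h : G.ends e = s(v, w)),
    (p.concat e h).edges = p.edges ++ [e]
  | _, _, _, .nil _, _, _ => rfl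
  | _, _, _, .cons _ _ p, e, h => by simp [concat, edges, edges_concat p e h]

/-- Reverse of a walk. -/
def reverse : ∀ {u v : V}, G.Walk u v → G.Walk v u
  | _, _, .nil v => .nil v
  | _, _, .cons e h p => p.reverse.concat e (h.trans (Sym2.eq_swap))

theorem verts_reverse : ∀ {u v : V} (p : G.Walk u v), p.reverse.verts = p.verts.reverse
  | _, _, .nil _ => rfl
  | _, _, .cons e h p => by
    simp [reverse, verts_concat, verts_reverse p, verts]

theorem edges_reverse : ∀ {u v : V} (p : G.Walk u v), p.reverse.edges = p.edges.reverse
  | _, _, .nil _ => rfl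
  | _, _, .cons e h p => by
    simp [reverse, edges_concat, edges_reverse p, edges]

/-- Concatenation of walks. -/
def append : ∀ {u v w : V}, G.Walk u v → G.Walk v w → G.Walk u w
  | _, _, _, .nil _, q => q
  | _, _, _, .cons e h p, q => .cons e h (p.append q)

theorem verts_append : ∀ {u v w : V} (p : G.Walk u v) (q : G.Walk v w),
    (p.append q).verts = p.verts.dropLast ++ q.verts
  | _, _, _, .nil _, q => rfl
  | _, _, _, .cons e h p, q => by
    have h1 : p.verts ≠ [] := verts_ne_nil p
    simp only [append, verts, verts_append p q]
    rw [List.dropLast_cons_of_ne_nil h1]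
    rfl

theorem edges_append : ∀ {u v w : V} (p : G.Walk u v) (q : G.Walk v w),
    (p.append q).edges = p.edges ++ q.edges
  | _, _, _, .nil _, q => rfl
  | _, _, _, .cons e h p, q => by simp [append, edges, edges_append p q]

/-- Image of a walk under a graph homomorphism. -/
def map {V' E' : Type} {H : Multigraph V' E'} (fv : V → V') (fe : E → E')
    (hm : ∀ e, H.ends (fe e) = (G.ends e).map fv) :
    ∀ {u v : V}, G.Walk u v → H.Walk (fv u) (fv v)
  | _, _, .nil v => .nil (fv v)
  | _, _, .cons e h p => .cons (fe e) (by rw [hm, h, Sym2.map_pair_eq]) (map fv fe hm p)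

theorem verts_map {V' E' : Type} {H : Multigraph V' E'} (fv : V → V') (fe : E → E')
    (hm : ∀ e, H.ends (fe e) = (G.ends e).map fv) :
    ∀ {u v : V} (p : G.Walk u v), (p.map fv fe hm).verts = p.verts.map fv
  | _, _, .nil _ => rfl
  | _, _, .cons e h p => by simp [map, verts, verts_map fv fe hm p]

theorem edges_map {V' E' : Type} {H : Multigraph V' E'} (fv : V → V') (fe : E → E')
    (hm : ∀ e, H.ends (fe e) = (G.ends e).map fv) :
    ∀ {u v : V} (p : G.Walk u v), (p.map fv fe hm).edges = p.edges.map fe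
  | _, _, .nil _ => rfl
  | _, _, .cons e h p => by simp [map, edges, edges_map fv fe hm p]

/-- Change the endpoints of a walk along equalities. -/
def copy {u u' v v' : V} (p : G.Walk u v) (hu : u = u') (hv : v = v') : G.Walk u' v' :=
  match u', v', hu, hv with
  | _, _, rfl, rfl => p

theorem verts_copy {u u' v v' : V} (p : G.Walk u v) (hu : u = u') (hv : v = v') :
    (p.copy hu hv).verts = p.verts := by subst hu; subst hv; rfl

theorem edges_copy {u u' v v' : V} (p : G.Walk u v) (hu : u = u') (hv : v = v') :
    (p.copy hu hv).edges = p.edges := by subst hu; subst hv; rfl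

theorem exists_walk_of_reachAvoid {F : Set E} {u v : V} (h : G.ReachAvoid F u v) :
    Nonempty (G.Walk u v) := by
  induction h with
  | refl => exact ⟨.nil _⟩
  | tail e he hvw h ih => exact ⟨ih.some.concat e hvw⟩

theorem exists_suffix_walk : ∀ {x v : V} (p : G.Walk x v) (u : V), u ∈ p.verts →
    ∃ q : G.Walk u v, q.verts <:+ p.verts
  | _, _, .nil v, u, hu => by
    simp only [verts, List.mem_singleton] at hu
    subst hu
    exact ⟨.nil u, List.suffix_refl _⟩
  | x, v, .cons e h p, u, hu => by
    by_cases hux : u = x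
    · subst hux
      exact ⟨.cons e h p, List.suffix_refl _⟩
    · have hu' : u ∈ p.verts := by
        simp only [verts, List.mem_cons] at hu
        tauto
      obtain ⟨q, hq⟩ := exists_suffix_walk p u hu'
      exact ⟨q, hq.trans (List.suffix_cons _ _)⟩

theorem exists_path : ∀ {u v : V} (p : G.Walk u v), ∃ q : G.Walk u v, q.verts.Nodup
  | _, _, .nil v => ⟨.nil v, by simp [verts]⟩
  | u, v, .cons e h p => by
    obtain ⟨q, hq⟩ := exists_path p
    by_cases hu : u ∈ q.verts
    · obtain ⟨q', hq'⟩ := exists_suffix_walk q u hu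
      exact ⟨q', hq.sublist hq'.sublist⟩
    · exact ⟨.cons e h q, by simp [verts, hq, hu]⟩

theorem exists_prefix_walk : ∀ {u b : V} (p : G.Walk u b) (c : V), c ∈ p.verts →
    ∃ q : G.Walk u c, q.verts <+: p.verts ∧ q.edges <+: p.edges
  | _, _, .nil b, c, hc => by
    simp only [verts, List.mem_singleton] at hc
    subst hc
    exact ⟨.nil c, List.prefix_refl _, List.prefix_refl _⟩
  | u, b, .cons e h p, c, hc => by
    by_cases hcu : c = u
    · subst hcu
      exact ⟨.nil c, ⟨p.verts, rfl⟩, List.nil_prefix⟩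
    · have hc' : c ∈ p.verts := by
        simp only [verts, List.mem_cons] at hc
        tauto
      obtain ⟨q, hqv, hqe⟩ := exists_prefix_walk p c hc'
      exact ⟨.cons e h q, by simpa [verts, List.cons_prefix_cons] using hqv,
        by simpa [edges, List.cons_prefix_cons] using hqe⟩

theorem exists_firstHit : ∀ {u a : V} (p : G.Walk u a) (L : List V), a ∈ L →
    ∃ (c : V) (q : G.Walk u c), c ∈ L ∧ (∀ x ∈ q.verts.dropLast, x ∉ L) ∧
      q.verts <+: p.verts ∧ q.edges <+: p.edges
  | _, a, .nil _, L, ha =>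
    ⟨a, .nil a, ha, by simp [verts], List.prefix_refl _, List.prefix_refl _⟩
  | u, a, .cons e h p, L, ha => by
    by_cases hu : u ∈ L
    · exact ⟨u, .nil u, hu, by simp [verts], ⟨p.verts, rfl⟩, List.nil_prefix⟩
    · obtain ⟨c, q, hc, hdrop, hqv, hqe⟩ := exists_firstHit p L ha
      refine ⟨c, .cons e h q, hc, ?_, by simpa [verts, List.cons_prefix_cons] using hqv,
        by simpa [edges, List.cons_prefix_cons] using hqe⟩
      intro x hx
      rw [show (Walk.cons e h q).verts = u :: q.verts from rfl,
        List.dropLast_cons_of_ne_nil (verts_ne_nil q), List.mem_cons] at hx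
      rcases hx with rfl | hx
      · exact hu
      · exact hdrop x hx

end Walk

theorem cycle_of_two_paths {V E : Type} [DecidableEq E] {G : Multigraph V E} {R a : V}
    (P Qw : G.Walk R a) (hP : P.verts.Nodup) (hQ : Qw.verts.Nodup) (haR : a ≠ R)
    (hdisj : ∀ e, e ∈ P.edges → e ∉ Qw.edges) :
    ∃ (c : V) (P1 : G.Walk R c) (Q1 : G.Walk R c),
      P1.edges ≠ [] ∧ Q1.edges ≠ [] ∧ P1.edges <+: P.edges ∧ Q1.edges <+: Qw.edges ∧
      G.IsSimpleCycleOn (P1.edges ++ Q1.edges.reverse).toFinset := by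
  set L := Qw.verts.tail with hL
  have haL : a ∈ L := Qw.end_mem_verts_tail (Ne.symm haR)
  have hRL : R ∉ L := by
    have := hQ
    rw [Qw.verts_eq_cons, List.nodup_cons] at this
    exact this.1
  obtain ⟨c, P1, hcL, hdrop, hvp, hep⟩ := P.exists_firstHit L haL
  have hcR : c ≠ R := fun h => hRL (h ▸ hcL)
  have hP1v : P1.verts.Nodup := hP.sublist hvp.sublist
  have hP1ne : P1.edges ≠ [] := fun h => hcR (P1.eq_of_edges_eq_nil h).symm
  have hcQ : c ∈ Qw.verts := by
    rw [Qw.verts_eq_cons]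
    exact List.mem_cons_of_mem _ hcL
  obtain ⟨Q1, hvq, heq⟩ := Qw.exists_prefix_walk c hcQ
  have hQ1v : Q1.verts.Nodup := hQ.sublist hvq.sublist
  have hQ1ne : Q1.edges ≠ [] := fun h => hcR (Q1.eq_of_edges_eq_nil h).symm
  have hQ1tail : Q1.verts.tail <+: L := by
    have h1 := hvq
    rw [Q1.verts_eq_cons, Qw.verts_eq_cons, List.cons_prefix_cons] at h1
    exact h1.2
  refine ⟨c, P1, Q1, hP1ne, hQ1ne, hep, heq, R, P1.append Q1.reverse, ?_, ?_, ?_, ?_⟩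
  · rw [Walk.edges_append]
    intro h
    exact hP1ne (List.append_eq_nil_iff.mp h).1
  · rw [Walk.edges_append, Walk.edges_reverse, List.nodup_append]
    refine ⟨P1.edges_nodup_of_verts_nodup hP1v, ?_, ?_⟩
    · rw [List.nodup_reverse]
      exact Q1.edges_nodup_of_verts_nodup hQ1v
    · intro e heP e' heQ hee
      subst hee
      exact hdisj e (hep.sublist.mem heP) (heq.sublist.mem (List.mem_reverse.mp heQ))
  · rw [Walk.verts_append, Walk.verts_reverse,
      List.dropLast_append_of_ne_nil (by simp [Q1.verts_ne_nil])]
    have hrev : Q1.verts.reverse.dropLast = Q1.verts.tail.reverse := by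
      conv_lhs => rw [Q1.verts_eq_cons]
      rw [List.reverse_cons, List.dropLast_concat]
    rw [hrev, List.nodup_append]
    refine ⟨hP1v.sublist (List.dropLast_sublist _), ?_, ?_⟩
    · rw [List.nodup_reverse]
      exact hQ1v.sublist (List.tail_sublist _)
    · intro x hxP x' hxQ hxx
      subst hxx
      exact hdrop x hxP (hQ1tail.sublist.mem (List.mem_reverse.mp hxQ))
  · rw [Walk.edges_append, Walk.edges_reverse]

theorem Walk.edges_head' {V E : Type} {G : Multigraph V E} :
    ∀ {u v : V} (p : G.Walk u v), u ≠ v →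
      ∃ (e : E) (x : V) (l : List E), G.ends e = s(u, x) ∧ p.edges = e :: l
  | _, _, .nil _, h => absurd rfl h
  | _, _, .cons e he p, _ => ⟨e, _, p.edges, he, rfl⟩

theorem exists_unique_root_edge {V E : Type} [Fintype E] [DecidableEq V]
    (G : Multigraph V E) (ρ : V) (h : G.degree ρ = 1) :
    ∃ g : E, ∀ (g' : E) (x : V), G.ends g' = s(ρ, x) → g' = g := by
  classical
  set cnt : E → ℕ := fun e =>
    Sym2.lift ⟨fun a b => (if a = ρ then 1 else 0) + (if b = ρ then 1 else 0),
      fun _ _ => add_comm _ _⟩ (G.ends e) with hcnt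
  have hsum : ∑ e, cnt e = 1 := h
  have hone : ∀ (g : E) (x : V), G.ends g = s(ρ, x) → 1 ≤ cnt g := by
    intro g x hgx
    simp [hcnt, hgx, Sym2.lift_mk]
  have hex : ∃ g : E, cnt g ≠ 0 := by
    by_contra hno
    push_neg at hno
    rw [Finset.sum_eq_zero (fun e _ => hno e)] at hsum
    exact one_ne_zero hsum.symm
  obtain ⟨g, hgne⟩ := hex
  refine ⟨g, fun g' x hgx => ?_⟩
  by_contra hne
  have h1 : 1 ≤ cnt g' := hone g' x hgx
  have h2 : 1 ≤ cnt g := Nat.one_le_iff_ne_zero.mpr hgne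
  have hle : cnt g' + cnt g ≤ ∑ e, cnt e := by
    rw [← Finset.sum_pair hne]
    exact Finset.sum_le_sum_of_subset (Finset.subset_univ _)
  omega

end Multigraph

theorem build_cycle {n : ℕ} {W F : Fin n → Type}
    [∀ i, DecidableEq (W i)] [∀ i, DecidableEq (F i)]
    (t : ∀ i, Multigraph (W i) (F i)) (r : ∀ i, W i)
    (π : Setoid (Unit ⊕ (Σ i, {x : W i // x ≠ r i})))
    (hdisc : ∀ (i : Fin n) (a b : W i), π.r (starJ r i a) (starJ r i b) → a = b)
    (i j : Fin n) (hij : i ≠ j)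
    (v : W i) (hv : v ≠ r i) (v' : W j) (hv' : v' ≠ r j)
    (hvv' : π.r (starJ r i v) (starJ r j v'))
    (hci : (t i).Connected) (hcj : (t j).Connected)
    (g : F i) (hg : ∀ (g' : F i) (x : W i), (t i).ends g' = s(r i, x) → g' = g) :
    ∃ S : Finset (Σ m, F m), ((starGraph t r).quot π).IsSimpleCycleOn S ∧
      (⟨i, g⟩ : Σ m, F m) ∈ S ∧ (∃ f : F j, (⟨j, f⟩ : Σ m, F m) ∈ S) ∧
      ∀ e ∈ S, e.1 = i ∨ e.1 = j := by
  classical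
  have hQends : ∀ (m : Fin n) (f : F m),
      ((starGraph t r).quot π).ends ⟨m, f⟩ =
        ((t m).ends f).map (fun x => Quotient.mk π (starJ r m x)) := by
    intro m f
    show Sym2.map _ (Sym2.map _ _) = _
    rw [Sym2.map_map]
    rfl
  have hinj : ∀ m : Fin n, Function.Injective (fun x => Quotient.mk π (starJ r m x)) :=
    fun m a b h => hdisc m a b (Quotient.exact h)
  obtain ⟨p₀⟩ := Multigraph.Walk.exists_walk_of_reachAvoid (hci (r i) v)
  obtain ⟨p, hp⟩ := p₀.exists_path
  obtain ⟨q₀⟩ := Multigraph.Walk.exists_walk_of_reachAvoid (hcj (r j) v')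
  obtain ⟨q, hq⟩ := q₀.exists_path
  set φi : W i → Quotient π := fun x => Quotient.mk π (starJ r i x) with hφi
  set φj : W j → Quotient π := fun x => Quotient.mk π (starJ r j x) with hφj
  have hR : φj (r j) = φi (r i) := by
    simp only [hφi, hφj, starJ, dif_pos]
  have ha : φj v' = φi v := Quotient.sound (π.iseqv.symm hvv')
  set P : ((starGraph t r).quot π).Walk (φi (r i)) (φi v) :=
    p.map φi (fun f => ⟨i, f⟩) (hQends i) with hPdef
  set Qw : ((starGraph t r).quot π).Walk (φi (r i)) (φi v) :=
    (q.map φj (fun f => ⟨j, f⟩) (hQends j)).copy hR ha with hQwdef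
  have hPv : P.verts.Nodup := by
    rw [hPdef, Multigraph.Walk.verts_map]
    exact List.Nodup.map (hinj i) hp
  have hQv : Qw.verts.Nodup := by
    rw [hQwdef, Multigraph.Walk.verts_copy, Multigraph.Walk.verts_map]
    exact List.Nodup.map (hinj j) hq
  have hPedges : P.edges = p.edges.map (fun f => (⟨i, f⟩ : Σ m, F m)) := by
    rw [hPdef, Multigraph.Walk.edges_map]
  have hQwedges : Qw.edges = q.edges.map (fun f => (⟨j, f⟩ : Σ m, F m)) := by
    rw [hQwdef, Multigraph.Walk.edges_copy, Multigraph.Walk.edges_map]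
  have haR : φi v ≠ φi (r i) := fun h => hv (hinj i h)
  have hdisj : ∀ e, e ∈ P.edges → e ∉ Qw.edges := by
    intro e heP heQ
    rw [hPedges] at heP
    rw [hQwedges] at heQ
    obtain ⟨f1, -, rfl⟩ := List.mem_map.mp heP
    obtain ⟨f2, -, hfe⟩ := List.mem_map.mp heQ
    exact hij (congrArg Sigma.fst hfe).symm
  obtain ⟨c, P1, Q1, hP1ne, hQ1ne, hP1pre, hQ1pre, hcyc⟩ :=
    Multigraph.cycle_of_two_paths P Qw hPv hQv haR hdisj
  have hmemhead : ∀ {α : Type} (l m : List α) (x : α), l ≠ [] → l <+: (x :: m) → x ∈ l := by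
    intro α l m x hne hpre
    cases l with
    | nil => exact absurd rfl hne
    | cons a l =>
      rw [List.cons_prefix_cons] at hpre
      exact hpre.1 ▸ List.mem_cons_self
  refine ⟨_, hcyc, ?_, ?_, ?_⟩
  · rw [List.mem_toFinset, List.mem_append]
    left
    obtain ⟨e, x, l, hex, hpe⟩ := Multigraph.Walk.edges_head' p (Ne.symm hv)
    have hge : e = g := hg e x hex
    have : P.edges = (⟨i, g⟩ : Σ m, F m) :: l.map (fun f => ⟨i, f⟩) := by
      rw [hPedges, hpe, hge]
      rfl
    exact hmemhead _ _ _ hP1ne (this ▸ hP1pre)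
  · obtain ⟨e, rest, hQ1e⟩ := List.exists_cons_of_ne_nil hQ1ne
    have heQw : e ∈ Qw.edges := hQ1pre.sublist.mem (hQ1e ▸ List.mem_cons_self)
    rw [hQwedges] at heQw
    obtain ⟨f, -, rfl⟩ := List.mem_map.mp heQw
    refine ⟨f, ?_⟩
    rw [List.mem_toFinset, List.mem_append]
    right
    rw [List.mem_reverse, hQ1e]
    exact List.mem_cons_self
  · intro e he
    rw [List.mem_toFinset, List.mem_append] at he
    rcases he with he | he
    · left
      have := hP1pre.sublist.mem he
      rw [hPedges] at this
      obtain ⟨f, -, rfl⟩ := List.mem_map.mp this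
      rfl
    · right
      have := hQ1pre.sublist.mem (List.mem_reverse.mp he)
      rw [hQwedges] at this
      obtain ⟨f, -, rfl⟩ := List.mem_map.mp this
      rfl

/-- Let `T` be the star obtained from `n ≥ 3` finite rooted trees
(each with at least two vertices and root of degree one) by identifying all the roots to
a single vertex `ρ`, and let `π` be a partition of the vertices of `T` that is discrete
on each tree.  If some tree `t i` has vertices `v, w ≠ ρ` identified by `π` with
vertices `v' ≠ ρ` of `t j` and `w' ≠ ρ` of `t k` for two different trees `j ≠ k` (both
different from `i`), then the quotient `T^π` is not a cactus. -/
theorem stmt_15 {n : ℕ} [NeZero n] (hn : 3 ≤ n) {W F : Fin n → Type}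
    [∀ i, Fintype (W i)] [∀ i, Fintype (F i)]
    [∀ i, DecidableEq (W i)] [∀ i, DecidableEq (F i)]
    (t : ∀ i, Multigraph (W i) (F i)) (r : ∀ i, W i)
    (htree : ∀ i, (t i).IsTree)
    (hcard : ∀ i, 1 < Fintype.card (W i))
    (hroot : ∀ i, (t i).degree (r i) = 1)
    (π : Setoid (Unit ⊕ (Σ i, {x : W i // x ≠ r i})))
    (hdisc : ∀ (i : Fin n) (a b : W i), π.r (starJ r i a) (starJ r i b) → a = b)
    (i j k : Fin n) (hjk : j ≠ k) (hij : i ≠ j) (hik : i ≠ k)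
    (v w : W i) (hv : v ≠ r i) (hw : w ≠ r i)
    (v' : W j) (hv' : v' ≠ r j) (w' : W k) (hw' : w' ≠ r k)
    (hvv' : π.r (starJ r i v) (starJ r j v'))
    (hww' : π.r (starJ r i w) (starJ r k w')) :
    ¬ ((starGraph t r).quot π).IsCactus := by
  intro hcac
  obtain ⟨g, hg⟩ := Multigraph.exists_unique_root_edge (t i) (r i) (hroot i)
  obtain ⟨S1, hS1cyc, hS1g, ⟨f, hf⟩, hS1sub⟩ :=
    build_cycle t r π hdisc i j hij v hv v' hv' hvv' (htree i).1 (htree j).1 g hg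
  obtain ⟨S2, hS2cyc, hS2g, -, hS2sub⟩ :=
    build_cycle t r π hdisc i k hik w hw w' hw' hww' (htree i).1 (htree k).1 g hg
  obtain ⟨S₀, -, huniq⟩ := hcac.2 ⟨i, g⟩
  have h12 : S1 = S2 := (huniq S1 ⟨hS1cyc, hS1g⟩).trans (huniq S2 ⟨hS2cyc, hS2g⟩).symm
  rcases hS2sub ⟨j, f⟩ (h12 ▸ hf) with h | h
  · exact hij h.symm
  · exact hjk h
end
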